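/- Let n be even and a₁, a₂ : 𝔽₂ⁿ → 𝔽₂ be Boolean functions such that a₂ and a₁ ⊕ a₂ are both bent. Then f : 𝔽₂ⁿ → ℤ₄, f(x) = a₁(x) + 2a₂(x), is gbent, i.e., |H_f^{(4)}(u)| = 2^{n/2} for all u ∈ 𝔽₂ⁿ. -/

import Mathlib

open Finset Complex

/-- Standard inner product on `𝔽₂ⁿ`. -/
def ip {n : ℕ} (u x : Fin n → ZMod 2) : ZMod 2 := ∑ i, u i * x i

/-- Walsh–Hadamard transform of a Boolean function. -/
noncomputable def WHT {n : ℕ} (g : (Fin n → ZMod 2) → ZMod 2) (u : Fin n → ZMod 2) : ℂ :=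
  ∑ x : Fin n → ZMod 2, (-1 : ℂ) ^ ((g x + ip u x).val)

/-- Generalized Walsh–Hadamard transform of `f : 𝔽₂ⁿ → ℤ_q`. -/
noncomputable def GWT {n : ℕ} (q : ℕ) [NeZero q] (f : (Fin n → ZMod 2) → ZMod q)
    (u : Fin n → ZMod 2) : ℂ :=
  ∑ x : Fin n → ZMod 2,
    Complex.exp (2 * Real.pi * Complex.I * ((f x).val : ℂ) / (q : ℂ)) *
      (-1 : ℂ) ^ ((ip u x).val)


lemma hexpI : Complex.exp (↑Real.pi * Complex.I / 2) = Complex.I := by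
  rw [show (↑Real.pi * Complex.I / 2 : ℂ) = (↑(Real.pi/2) : ℂ) * Complex.I by push_cast; ring,
    Complex.exp_mul_I]
  simp [← Complex.ofReal_cos, ← Complex.ofReal_sin]

lemma hexp (v : ℕ) : Complex.exp (2 * Real.pi * Complex.I * (v:ℂ) / 4) = Complex.I ^ v := by
  rw [show (2 * ↑Real.pi * Complex.I * (v:ℂ) / 4 : ℂ) = (v:ℕ) * (↑Real.pi * Complex.I / 2) by
      push_cast; ring, Complex.exp_nat_mul, hexpI]

lemma WHT_real {n : ℕ} (g : (Fin n → ZMod 2) → ZMod 2) (u : Fin n → ZMod 2) :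
    WHT g u = ((∑ x : Fin n → ZMod 2, (-1 : ℝ) ^ ((g x + ip u x).val) : ℝ) : ℂ) := by
  unfold WHT; push_cast; rfl

lemma zmod2cases : ∀ e : ZMod 2, e = 0 ∨ e = 1 := by decide

lemma pointwise (e1 e2 e3 : ZMod 2) :
    Complex.I ^ (((e1.val : ZMod 4) + 2 * (e2.val : ZMod 4)).val) * (-1:ℂ) ^ e3.val =
      (1+Complex.I)/2 * (-1:ℂ)^((e2+e3).val) + (1-Complex.I)/2 * (-1:ℂ)^((e1+e2+e3).val) := by
  rcases zmod2cases e1 with h1|h1 <;> rcases zmod2cases e2 with h2|h2 <;>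
    rcases zmod2cases e3 with h3|h3 <;> subst h1 h2 h3 <;>
  simp only [show ((0:ZMod 2)+0).val = 0 from by decide, show ((0:ZMod 2)+1).val = 1 from by decide,
      show ((1:ZMod 2)+0).val = 1 from by decide, show ((1:ZMod 2)+1).val = 0 from by decide,
      show ((0:ZMod 2)+0+0).val = 0 from by decide,
      show ((0:ZMod 2)+0+1).val = 1 from by decide, show ((0:ZMod 2)+1+0).val = 1 from by decide,
      show ((0:ZMod 2)+1+1).val = 0 from by decide, show ((1:ZMod 2)+0+0).val = 1 from by decide,
      show ((1:ZMod 2)+0+1).val = 0 from by decide, show ((1:ZMod 2)+1+0).val = 0 from by decide,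
      show ((1:ZMod 2)+1+1).val = 1 from by decide,
      show ((0:ZMod 2)).val = 0 from by decide, show ((1:ZMod 2)).val = 1 from by decide,
      Nat.cast_zero, Nat.cast_one,
      show (((0:ZMod 4)) + 2 * 0).val = 0 from by decide,
      show (((1:ZMod 4)) + 2 * 0).val = 1 from by decide,
      show (((0:ZMod 4)) + 2 * 1).val = 2 from by decide,
      show (((1:ZMod 4)) + 2 * 1).val = 3 from by decide] <;>
  · norm_num [pow_succ, Complex.I_sq]
    try ring_nf


theorem gbent_z4_of_components_bent (n : ℕ) (hn : Even n)
    (a1 a2 : (Fin n → ZMod 2) → ZMod 2) (f : (Fin n → ZMod 2) → ZMod 4)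
    (hf : ∀ x, f x = ((a1 x).val : ZMod 4) + 2 * ((a2 x).val : ZMod 4))
    (h2 : ∀ u, ‖WHT a2 u‖ = 2 ^ (n / 2))
    (h12 : ∀ u, ‖WHT (fun x => a1 x + a2 x) u‖ = 2 ^ (n / 2)) :
    ∀ u, ‖GWT 4 f u‖ = 2 ^ (n / 2) := by
  intro u
  obtain ⟨m, hm⟩ := hn
  have hnm : n / 2 = m := by omega
  -- decomposition
  have key : GWT 4 f u = (1 + Complex.I)/2 * WHT a2 u
      + (1 - Complex.I)/2 * WHT (fun x => a1 x + a2 x) u := by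
    unfold GWT WHT
    rw [Finset.mul_sum, Finset.mul_sum, ← Finset.sum_add_distrib]
    refine Finset.sum_congr rfl fun x _ => ?_
    rw [hf x, show ((4:ℕ):ℂ) = 4 by norm_num, hexp]
    exact pointwise (a1 x) (a2 x) (ip u x)
  set a : ℝ := ∑ x : Fin n → ZMod 2, (-1 : ℝ) ^ ((a2 x + ip u x).val) with ha
  set b : ℝ := ∑ x : Fin n → ZMod 2, (-1 : ℝ) ^ (((fun x => a1 x + a2 x) x + ip u x).val) with hb
  have hA : WHT a2 u = (a : ℂ) := WHT_real a2 u
  have hB : WHT (fun x => a1 x + a2 x) u = (b : ℂ) := WHT_real _ u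
  have ha2 : a ^ 2 = 2 ^ n := by
    have h := h2 u
    rw [hA, Complex.norm_real, Real.norm_eq_abs, hnm] at h
    rw [← _root_.sq_abs a, h, ← pow_mul]; congr 1; omega
  have hb2 : b ^ 2 = 2 ^ n := by
    have h := h12 u
    rw [hB, Complex.norm_real, Real.norm_eq_abs, hnm] at h
    rw [← _root_.sq_abs b, h, ← pow_mul]; congr 1; omega
  rw [key, hA, hB, hnm]
  rw [Complex.norm_def]
  have hre : ((1 + Complex.I)/2 * (a:ℂ) + (1 - Complex.I)/2 * (b:ℂ)).re = (a + b)/2 := by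
    simp [Complex.add_re, Complex.mul_re, Complex.div_re]; ring
  have him : ((1 + Complex.I)/2 * (a:ℂ) + (1 - Complex.I)/2 * (b:ℂ)).im = (a - b)/2 := by
    simp [Complex.add_im, Complex.mul_im, Complex.div_im]; ring
  rw [Complex.normSq_apply, hre, him]
  have : (a + b)/2 * ((a + b)/2) + (a - b)/2 * ((a - b)/2) = (2:ℝ)^m * (2:ℝ)^m := by
    have h : (a+b)/2 * ((a+b)/2) + (a-b)/2 * ((a-b)/2) = (a^2 + b^2)/2 := by ring
    rw [h, ha2, hb2, hm, ← pow_add]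
    rw [show m + m = 2 * m by ring]
    ring_nf
  rw [this, Real.sqrt_mul_self (by positivity)]
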